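/- Let J be a network Jacobian (as defined in the context) and suppose d_i > 0 for at least one vertex i. Then every eigenvalue of J, i.e., every root in ℂ of the characteristic polynomial of J, has strictly negative real part. (This is the paper's Theorem 1: any equilibrium point of the single-commodity network ODE at which the local-policy sign conditions hold is asymptotically stable.) -/

import Mathlib

/-- A *network Jacobian*: a finite directed acyclic graph on `Fin N`
(no self-loops, at most one direction per pair, connected underlying
undirected graph), positive reals `p i j`, `n i j` on each edge `(i,j) ∈ E`
(modeling `∂g_{ij}/∂q_i > 0` and `−∂g_{ij}/∂q_j > 0`), and nonnegative
departure derivatives `d i` at each vertex. -/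
structure NetworkJacobian (N : ℕ) where
  E : Finset (Fin N × Fin N)
  no_self_loops : ∀ e ∈ E, e.1 ≠ e.2
  antisymm : ∀ i u : Fin N, (i, u) ∈ E → (u, i) ∉ E
  acyclic : ∃ rank : Fin N → ℕ, ∀ e ∈ E, rank e.1 < rank e.2
  connected : (SimpleGraph.fromRel fun i u => (i, u) ∈ E).Connected
  p : Fin N → Fin N → ℝ
  n : Fin N → Fin N → ℝ
  d : Fin N → ℝ
  p_pos : ∀ e ∈ E, 0 < p e.1 e.2
  n_pos : ∀ e ∈ E, 0 < n e.1 e.2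
  d_nonneg : ∀ i, 0 ≤ d i

/-- The matrix `J` associated to a network Jacobian:
`J i u = n i u` if `(i,u) ∈ E`, `J i u = p u i` if `(u,i) ∈ E`, `J i u = 0`
for other `i ≠ u`, and
`J u u = −Σ_{k:(k,u)∈E} n k u − Σ_{j:(u,j)∈E} p u j − d u`. -/
noncomputable def NetworkJacobian.J {N : ℕ} (G : NetworkJacobian N) :
    Matrix (Fin N) (Fin N) ℝ := fun i u =>
  if i = u then
    -(∑ k ∈ Finset.univ.filter fun k => (k, u) ∈ G.E, G.n k u)
      - (∑ j ∈ Finset.univ.filter fun j => (u, j) ∈ G.E, G.p u j) - G.d u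
  else if (i, u) ∈ G.E then G.n i u
  else if (u, i) ∈ G.E then G.p u i
  else 0

/-- **Theorem 1.** If `d i > 0` for at least one vertex `i`, then every
eigenvalue of the network Jacobian `J` (every complex root of its
characteristic polynomial) has strictly negative real part. -/
theorem stmt0 {N : ℕ} (G : NetworkJacobian N) (hd : ∃ i, 0 < G.d i) :
    ∀ z : ℂ, ((G.J).map (fun x : ℝ => (x : ℂ))).charpoly.IsRoot z → z.re < 0 := by
  intro z h
  by_contra hre
  push_neg at hre
  set M : Matrix (Fin N) (Fin N) ℂ := (G.J).map (fun x : ℝ => (x : ℂ)) with hM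
  -- Step 1: get a left eigenvector
  obtain ⟨v, hv0, heq⟩ : ∃ v : Fin N → ℂ, v ≠ 0 ∧ ∀ u, ∑ i, M i u * v i = z * v u := by
    have h1 : ((Matrix.charmatrix M).map (Polynomial.eval z)).det = 0 := by
      have := (RingHom.map_det (Polynomial.evalRingHom z) (Matrix.charmatrix M)).symm
      simp only [RingHom.mapMatrix_apply, Polynomial.coe_evalRingHom] at this
      rw [this]; exact h
    set A : Matrix (Fin N) (Fin N) ℂ :=
      Matrix.of fun i u => z * (if i = u then (1:ℂ) else 0) - M i u with hA
    have h2 : A.det = 0 := by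
      convert h1 using 2
      ext i u
      by_cases hiu : i = u <;>
        simp [hA, Matrix.charmatrix_apply, Matrix.one_apply, Matrix.diagonal_apply, hiu]
    have h3 : A.transpose.det = 0 := by rw [Matrix.det_transpose]; exact h2
    obtain ⟨v, hv0, hv⟩ := (Matrix.exists_mulVec_eq_zero_iff).mpr h3
    refine ⟨v, hv0, fun u => ?_⟩
    have heq := congrFun hv u
    simp only [Matrix.mulVec, dotProduct, Matrix.transpose_apply, hA, Matrix.of_apply,
      Pi.zero_apply, sub_mul, Finset.sum_sub_distrib] at heq
    have h4 : ∑ i, z * (if i = u then (1:ℂ) else 0) * v i = z * v u := by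
      rw [Finset.sum_eq_single u] <;> simp +contextual [eq_comm]
    rw [h4] at heq
    linear_combination -heq
  -- setup
  set f : Fin N → ℝ := fun i => ‖v i‖ with hf
  obtain ⟨istar, histar⟩ := hd
  obtain ⟨u0, -, hu0⟩ := Finset.exists_max_image Finset.univ f ⟨istar, Finset.mem_univ _⟩
  set m : ℝ := f u0 with hm
  have hfle : ∀ i, f i ≤ m := fun i => hu0 i (Finset.mem_univ i)
  have hmpos : 0 < m := by
    obtain ⟨j, hj⟩ := Function.ne_iff.mp hv0
    have : 0 < f j := by simpa [hf] using norm_pos_iff.mpr hj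
    exact this.trans_le (hfle j)
  -- key lemma
  have key : ∀ u, f u = m →
      G.d u = 0 ∧ ∀ i, ((i, u) ∈ G.E ∨ (u, i) ∈ G.E) → f i = m := by
    intro u hu
    have hJoff : ∀ i, i ≠ u → G.J i u =
        (if (i, u) ∈ G.E then G.n i u else if (u, i) ∈ G.E then G.p u i else 0) := by
      intro i hiu; simp [NetworkJacobian.J, hiu]
    have hJoff_nonneg : ∀ i ∈ Finset.univ.erase u, 0 ≤ G.J i u := by
      intro i hi
      rw [hJoff i (Finset.ne_of_mem_erase hi)]
      split_ifs with h1 h2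
      · exact (G.n_pos _ h1).le
      · exact (G.p_pos _ h2).le
      · exact le_refl 0
    -- splitting the off-diagonal column sum
    have hsplit : ∀ g : Fin N → ℝ, ∑ i ∈ Finset.univ.erase u, G.J i u * g i =
        (∑ k ∈ Finset.univ.filter (fun k => (k, u) ∈ G.E), G.n k u * g k)
        + ∑ j ∈ Finset.univ.filter (fun j => (u, j) ∈ G.E), G.p u j * g j := by
      intro g
      have hsub : (Finset.univ.filter (fun k => (k, u) ∈ G.E) ∪
          Finset.univ.filter (fun j => (u, j) ∈ G.E)) ⊆ Finset.univ.erase u := by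
        intro i hi
        rcases Finset.mem_union.mp hi with hi | hi
        · exact Finset.mem_erase.mpr ⟨G.no_self_loops _ (Finset.mem_filter.mp hi).2,
            Finset.mem_univ _⟩
        · exact Finset.mem_erase.mpr ⟨fun he => G.no_self_loops _
            (Finset.mem_filter.mp hi).2 (by simp [he]), Finset.mem_univ _⟩
      have hdisj : Disjoint (Finset.univ.filter (fun k => (k, u) ∈ G.E))
          (Finset.univ.filter (fun j => (u, j) ∈ G.E)) := by
        rw [Finset.disjoint_left]
        intro i hi1 hi2
        exact G.antisymm i u (Finset.mem_filter.mp hi1).2 (Finset.mem_filter.mp hi2).2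
      rw [← Finset.sum_subset hsub, Finset.sum_union hdisj]
      · congr 1
        · refine Finset.sum_congr rfl fun i hi => ?_
          have hiE := (Finset.mem_filter.mp hi).2
          rw [hJoff i (G.no_self_loops _ hiE), if_pos hiE]
        · refine Finset.sum_congr rfl fun i hi => ?_
          have hiE := (Finset.mem_filter.mp hi).2
          have hne : i ≠ u := fun he => G.no_self_loops _ hiE (by simp [he])
          rw [hJoff i hne, if_neg (fun hc => G.antisymm i u hc hiE), if_pos hiE]
      · intro i hi hni
        have hne := Finset.ne_of_mem_erase hi
        rw [hJoff i hne]
        simp only [Finset.mem_union, Finset.mem_filter, Finset.mem_univ, true_and,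
          not_or] at hni
        rw [if_neg hni.1, if_neg hni.2, zero_mul]
    set AB : ℝ := ∑ i ∈ Finset.univ.erase u, G.J i u with hAB
    have hABval : AB = (∑ k ∈ Finset.univ.filter (fun k => (k, u) ∈ G.E), G.n k u)
        + ∑ j ∈ Finset.univ.filter (fun j => (u, j) ∈ G.E), G.p u j := by
      have h1 := hsplit (fun _ => 1)
      simp only [mul_one] at h1
      exact h1
    have hJuu : G.J u u = -(AB + G.d u) := by
      have hdiag : G.J u u =
          -(∑ k ∈ Finset.univ.filter (fun k => (k, u) ∈ G.E), G.n k u)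
          - (∑ j ∈ Finset.univ.filter (fun j => (u, j) ∈ G.E), G.p u j) - G.d u := by
        simp [NetworkJacobian.J]
      rw [hdiag, hABval]; ring
    have hABnn : 0 ≤ AB := Finset.sum_nonneg hJoff_nonneg
    -- eigen equation at u
    have heq2 : ∑ i ∈ Finset.univ.erase u, (G.J i u : ℂ) * v i = (z - (G.J u u : ℂ)) * v u := by
      have := heq u
      rw [← Finset.add_sum_erase _ _ (Finset.mem_univ u)] at this
      have hMu : ∀ i, M i u = (G.J i u : ℂ) := fun i => rfl
      rw [hMu u] at this
      simp only [hMu] at this ⊢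
      linear_combination this
    -- the chain of inequalities
    set T : ℝ := ∑ i ∈ Finset.univ.erase u, G.J i u * f i with hT
    have hTle : T ≤ AB * m := by
      rw [hT, hAB, Finset.sum_mul]
      refine Finset.sum_le_sum fun i hi => ?_
      exact mul_le_mul_of_nonneg_left (hfle i) (hJoff_nonneg i hi)
    have habs : ‖(z - (G.J u u : ℂ)) * v u‖ ≤ T := by
      rw [← heq2]
      refine (norm_sum_le _ _).trans ?_
      refine le_of_eq (Finset.sum_congr rfl fun i hi => ?_)
      rw [norm_mul, Complex.norm_real, Real.norm_eq_abs, abs_of_nonneg (hJoff_nonneg i hi)]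
    have hlb : (AB + G.d u) * m ≤ ‖(z - (G.J u u : ℂ)) * v u‖ := by
      rw [norm_mul]
      have h1 : AB + G.d u ≤ ‖z - (G.J u u : ℂ)‖ := by
        have : AB + G.d u ≤ (z - (G.J u u : ℂ)).re := by
          simp only [Complex.sub_re, Complex.ofReal_re, hJuu]
          linarith
        exact this.trans (Complex.re_le_norm _)
      have h2 : ‖v u‖ = m := hu
      rw [h2]
      exact mul_le_mul_of_nonneg_right h1 hmpos.le
    have hchain : (AB + G.d u) * m ≤ AB * m := le_trans hlb (le_trans habs hTle)
    have hdu : G.d u = 0 := by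
      have := G.d_nonneg u
      nlinarith
    refine ⟨hdu, fun i hi => ?_⟩
    -- equality case: T = AB * m
    have hTeq : T = AB * m := by
      have : AB * m ≤ T := by
        have := hchain
        rw [hdu] at hlb
        simp only [add_zero] at hlb
        exact le_trans hlb habs
      linarith
    have hzero : ∀ j ∈ Finset.univ.erase u, G.J j u * (m - f j) = 0 := by
      have hsum : ∑ j ∈ Finset.univ.erase u, G.J j u * (m - f j) = 0 := by
        have : ∑ j ∈ Finset.univ.erase u, G.J j u * (m - f j) = AB * m - T := by
          rw [hAB, hT, Finset.sum_mul, ← Finset.sum_sub_distrib]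
          exact Finset.sum_congr rfl fun j _ => by ring
        rw [this, hTeq]; ring
      intro j hj
      refine (Finset.sum_eq_zero_iff_of_nonneg fun j hj => ?_).mp hsum j hj
      exact mul_nonneg (hJoff_nonneg j hj) (by linarith [hfle j])
    rcases hi with hiE | hiE
    · have hne : i ≠ u := G.no_self_loops _ hiE
      have := hzero i (Finset.mem_erase.mpr ⟨hne, Finset.mem_univ _⟩)
      rw [hJoff i hne, if_pos hiE] at this
      have hpos := G.n_pos _ hiE
      have : m - f i = 0 := by
        rcases mul_eq_zero.mp this with h' | h'
        · exact absurd h' (ne_of_gt hpos)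
        · exact h'
      linarith
    · have hne : i ≠ u := fun he => G.no_self_loops _ hiE (by simp [he])
      have := hzero i (Finset.mem_erase.mpr ⟨hne, Finset.mem_univ _⟩)
      rw [hJoff i hne, if_neg (fun hc => G.antisymm i u hc hiE), if_pos hiE] at this
      have hpos := G.p_pos _ hiE
      have : m - f i = 0 := by
        rcases mul_eq_zero.mp this with h' | h'
        · exact absurd h' (ne_of_gt hpos)
        · exact h'
      linarith
  -- propagate along walks
  have reach : ∀ a b : Fin N,
      ∀ _ : (SimpleGraph.fromRel fun i u => (i, u) ∈ G.E).Walk a b, f a = m → f b = m := by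
    intro a b w
    induction w with
    | nil => exact id
    | cons hadj p ih =>
      intro ha
      obtain ⟨-, hor⟩ := (SimpleGraph.fromRel_adj _ _ _).mp hadj
      exact ih ((key _ ha).2 _ hor.symm)
  have hfi : f istar = m :=
    (G.connected.preconnected u0 istar).elim fun w => reach u0 istar w rfl
  exact absurd ((key istar hfi).1) (ne_of_gt histar)
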